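/- Let a_A, a_B ≥ 1 and 0 ≤ l_A, l_B ≤ 1 with l_A < 1 and l_B < 1. Define κ_A = a_A(1-l_A), κ_B = a_B(1-l_B). Then the Filippov–Ziman entanglement-annihilation condition κ_A·μ_B + κ_B·μ_A ≥ (κ_A + κ_B)/2, with μ_A = κ_A/2 + l_A - 1/2 and μ_B = κ_B/2 + l_B - 1/2, holds if and only if a_A·a_B ≥ a_A + a_B. -/
import Mathlib

/-- Filippov–Ziman entanglement-annihilation condition for amplification-then-loss
channels is equivalent to `a_A a_B ≥ a_A + a_B`. -/
theorem filippov_ziman_amp_loss (aA aB lA lB : ℝ)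
    (haA : 1 ≤ aA) (haB : 1 ≤ aB)
    (hA0 : 0 ≤ lA) (hA1 : lA < 1) (hB0 : 0 ≤ lB) (hB1 : lB < 1) :
    (aA * (1 - lA)) * ((aB * (1 - lB)) / 2 + lB - 1 / 2) +
        (aB * (1 - lB)) * ((aA * (1 - lA)) / 2 + lA - 1 / 2) ≥
        ((aA * (1 - lA)) + (aB * (1 - lB))) / 2 ↔
      aA * aB ≥ aA + aB := by
  have hA : 0 < 1 - lA := by linarith
  have hB : 0 < 1 - lB := by linarith
  constructor
  · intro h
    nlinarith [mul_pos hA hB, sq_nonneg (aA - aB)]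
  · intro h
    nlinarith [mul_pos hA hB]
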